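/- Let (X_h)_{h∈H} be a family of sequentially pseudocompact topological spaces. If (O_n)_{n∈ℕ} is a sequence of nonempty sets that are open in the ω-box topology on ∏_{h∈H} X_h, then there exist an infinite set J ⊆ ℕ and a point x ∈ ∏_{h∈H} X_h such that for every neighborhood U of x in the Tychonoff product topology, the set {n ∈ J : U ∩ O_n = ∅} is finite. -/

import Mathlib

def SeqPseudocompact (X : Type*) [TopologicalSpace X] : Prop :=
  ∀ O : ℕ → Set X, (∀ n, IsOpen (O n)) → (∀ n, (O n).Nonempty) →
    ∃ J : Set ℕ, J.Infinite ∧ ∃ x : X,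
      ∀ U ∈ nhds x, {n ∈ J | U ∩ O n = ∅}.Finite

/-- The ω-box topology on a product: generated by boxes where all but countably
many coordinates are the whole space. -/
def omegaBoxTopology {H : Type*} (X : H → Type*) [∀ h, TopologicalSpace (X h)] :
    TopologicalSpace (∀ h, X h) :=
  TopologicalSpace.generateFrom
    { S | ∃ O : ∀ h, Set (X h), (∀ h, IsOpen (O h)) ∧
        {h | O h ≠ Set.univ}.Countable ∧ S = Set.pi Set.univ O }

lemma omegaBox_exists_box {H : Type*} {X : H → Type*} [∀ h, TopologicalSpace (X h)]
    {U : Set (∀ h, X h)} (hU : @IsOpen _ (omegaBoxTopology X) U) :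
    ∀ x ∈ U, ∃ O : ∀ h, Set (X h), (∀ h, IsOpen (O h)) ∧ {h | O h ≠ Set.univ}.Countable ∧
      x ∈ Set.pi Set.univ O ∧ Set.pi Set.univ O ⊆ U := by
  have hU' : TopologicalSpace.GenerateOpen
      { S | ∃ O : ∀ h, Set (X h), (∀ h, IsOpen (O h)) ∧
        {h | O h ≠ Set.univ}.Countable ∧ S = Set.pi Set.univ O } U := hU
  clear hU
  induction hU' with
  | basic V hV =>
    obtain ⟨Ob, hOb, hc, rfl⟩ := hV
    exact fun x hx => ⟨Ob, hOb, hc, hx, subset_rfl⟩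
  | univ =>
    exact fun x _ => ⟨fun _ => Set.univ, fun _ => isOpen_univ, by simp, by simp, by simp⟩
  | inter V W hV hW ihV ihW =>
    intro x hx
    obtain ⟨O1, h1, c1, m1, s1⟩ := ihV x hx.1
    obtain ⟨O2, h2, c2, m2, s2⟩ := ihW x hx.2
    refine ⟨fun h => O1 h ∩ O2 h, fun h => (h1 h).inter (h2 h), ?_, ?_, ?_⟩
    · refine (c1.union c2).mono fun h hh => ?_
      simp only [Set.mem_setOf_eq, Set.mem_union] at hh ⊢
      by_contra hc
      push_neg at hc
      exact hh (by rw [hc.1, hc.2, Set.univ_inter])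
    · exact fun h _ => ⟨m1 h (Set.mem_univ h), m2 h (Set.mem_univ h)⟩
    · intro y hy
      exact ⟨s1 fun h _ => (hy h (Set.mem_univ h)).1, s2 fun h _ => (hy h (Set.mem_univ h)).2⟩
  | sUnion T hT ih =>
    intro x hx
    obtain ⟨t, ht, hxt⟩ := hx
    obtain ⟨Ob, a, b, c, d⟩ := ih t ht x hxt
    exact ⟨Ob, a, b, c, d.trans (Set.subset_sUnion_of_mem ht)⟩

theorem seqPseudocompact_omegaBox {H : Type*} (X : H → Type*) [∀ h, TopologicalSpace (X h)]
    (hX : ∀ h, SeqPseudocompact (X h)) (O : ℕ → Set (∀ h, X h))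
    (hopen : ∀ n, @IsOpen _ (omegaBoxTopology X) (O n)) (hne : ∀ n, (O n).Nonempty) :
    ∃ J : Set ℕ, J.Infinite ∧ ∃ x : ∀ h, X h,
      ∀ U ∈ nhds x, {n ∈ J | U ∩ O n = ∅}.Finite := by
  classical
  -- choose boxes inside each O n
  have hbox : ∀ n, ∃ B : ∀ h, Set (X h), (∀ h, IsOpen (B h)) ∧
      {h | B h ≠ Set.univ}.Countable ∧ (∀ h, (B h).Nonempty) ∧ Set.pi Set.univ B ⊆ O n := by
    intro n
    obtain ⟨x, hx⟩ := hne n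
    obtain ⟨B, a, b, c, d⟩ := omegaBox_exists_box (hopen n) x hx
    exact ⟨B, a, b, fun h => ⟨x h, c h (Set.mem_univ h)⟩, d⟩
  choose B hBopen hBc hBne hBsub using hbox
  set S : Set H := ⋃ n, {h | B n h ≠ Set.univ} with hSdef
  have hSc : S.Countable := Set.countable_iUnion hBc
  have hBuniv : ∀ n h, h ∉ S → B n h = Set.univ := by
    intro n h hh
    by_contra hcon
    exact hh (Set.mem_iUnion.mpr ⟨n, hcon⟩)
  -- a default point
  obtain ⟨x0, hx0⟩ := hne 0
  by_cases hS : S.Nonempty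
  · obtain ⟨f, hf⟩ := hSc.exists_eq_range hS
    -- the refinement step at a single coordinate
    have step : ∀ (h : H) (J : Set ℕ), J.Infinite → ∃ J' : Set ℕ, J' ⊆ J ∧ J'.Infinite ∧
        ∃ x : X h, ∀ U ∈ nhds x, {m ∈ J' | U ∩ B m h = ∅}.Finite := by
      intro h J hJ
      set e : ℕ → ℕ := fun n => ((Set.Infinite.natEmbedding J hJ) n : ℕ) with he
      have heinj : Function.Injective e :=
        fun a b hab => (Set.Infinite.natEmbedding J hJ).injective (Subtype.ext hab)
      have hemem : ∀ n, e n ∈ J := fun n => ((Set.Infinite.natEmbedding J hJ) n).2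
      obtain ⟨J0, hJ0inf, x, hx⟩ := hX h (fun n => B (e n) h) (fun n => hBopen (e n) h)
        (fun n => hBne (e n) h)
      refine ⟨e '' J0, ?_, hJ0inf.image (heinj.injOn), x, ?_⟩
      · rintro m ⟨n, _, rfl⟩; exact hemem n
      · intro U hU
        refine ((hx U hU).image e).subset ?_
        rintro m ⟨⟨n, hn, rfl⟩, hm⟩
        exact ⟨n, ⟨hn, hm⟩, rfl⟩
    choose stepJ stepSub stepInf stepX stepSpec using step
    -- the chain of refinements along the enumeration f of S
    let C : ℕ → {J : Set ℕ // J.Infinite} := fun k => Nat.rec ⟨Set.univ, Set.infinite_univ⟩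
      (fun k p => ⟨stepJ (f k) p.1 p.2, stepInf (f k) p.1 p.2⟩) k
    have hCsucc : ∀ k, (C (k + 1)).1 = stepJ (f k) (C k).1 (C k).2 := fun k => rfl
    have hCsub : ∀ k, (C (k + 1)).1 ⊆ (C k).1 := fun k => stepSub (f k) (C k).1 (C k).2
    have hCmono : ∀ k j, k ≤ j → (C j).1 ⊆ (C k).1 := by
      intro k j hkj
      induction j, hkj using Nat.le_induction with
      | base => exact subset_rfl
      | succ j hkj ih => exact (hCsub j).trans ih
    -- the chosen points and their properties
    let xk : ∀ k, X (f k) := fun k => stepX (f k) (C k).1 (C k).2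
    have hxk : ∀ k, ∀ U ∈ nhds (xk k), {m ∈ (C (k + 1)).1 | U ∩ B m (f k) = ∅}.Finite :=
      fun k => stepSpec (f k) (C k).1 (C k).2
    -- the diagonal sequence
    have pick : ∀ (k : ℕ) (a : ℕ), ∃ b ∈ (C k).1, a < b := fun k a => (C k).2.exists_gt a
    choose p hpmem hplt using pick
    let n : ℕ → ℕ := fun k => Nat.rec (p 0 0) (fun k prev => p (k + 1) prev) k
    have hnsucc : ∀ k, n (k + 1) = p (k + 1) (n k) := fun k => rfl
    have hnmem : ∀ k, n k ∈ (C k).1 := by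
      intro k
      cases k with
      | zero => exact hpmem 0 0
      | succ k => exact hpmem (k + 1) (n k)
    have hnmono : StrictMono n := strictMono_nat_of_lt_succ fun k => hplt (k + 1) (n k)
    set J : Set ℕ := Set.range n with hJdef
    have hJinf : J.Infinite := Set.infinite_range_of_injective hnmono.injective
    have hJdiff : ∀ K, (J \ (C K).1).Finite := by
      intro K
      refine ((Set.finite_Iio K).image n).subset ?_
      rintro m ⟨⟨j, rfl⟩, hm⟩
      refine ⟨j, ?_, rfl⟩
      by_contra hj
      exact hm (hCmono K j (le_of_not_gt (fun hlt => hj hlt)) (hnmem j))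
    -- the point x
    have hmemS : ∀ h, h ∈ S → ∃ k, f k = h := by
      intro h hh
      rw [hf] at hh
      exact hh
    choose idx hidx using hmemS
    refine ⟨J, hJinf, fun h => if hh : h ∈ S then (hidx h hh) ▸ xk (idx h hh) else x0 h, ?_⟩
    set x : ∀ h, X h := fun h => if hh : h ∈ S then (hidx h hh) ▸ xk (idx h hh) else x0 h with hxdef
    -- key per-coordinate property
    have key : ∀ h, h ∈ S → ∀ u : Set (X h), IsOpen u → x h ∈ u →
        ∃ K : ℕ, {m ∈ (C K).1 | u ∩ B m h = ∅}.Finite := by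
      intro h hh
      have hxh : ∃ k : ℕ, ∃ e : f k = h, x h = e ▸ xk k :=
        ⟨idx h hh, hidx h hh, by rw [hxdef]; simp only [dif_pos hh]⟩
      obtain ⟨k, e, hxe⟩ := hxh
      subst e
      intro u huo hxu
      rw [hxe] at hxu
      exact ⟨k + 1, hxk k u (huo.mem_nhds hxu)⟩
    -- final verification
    intro U hU
    obtain ⟨t, htU, hto, hxt⟩ := mem_nhds_iff.mp hU
    obtain ⟨F, u, hu, hFsub⟩ := isOpen_pi_iff.mp hto x hxt
    set T : Set H := ↑F ∩ S with hTdef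
    have hTfin : T.Finite := F.finite_toSet.inter_of_left S
    have hKex : ∀ h : T, ∃ K : ℕ, {m ∈ (C K).1 | u h ∩ B m (h : H) = ∅}.Finite := by
      rintro ⟨h, hhF, hhS⟩
      exact key h hhS (u h) (hu h hhF).1 (hu h hhF).2
    choose K hK using hKex
    haveI := hTfin.to_subtype
    refine (Set.finite_iUnion (f := fun h : T =>
      {m ∈ (C (K h)).1 | u h ∩ B m (h : H) = ∅} ∪ (J \ (C (K h)).1))
      (fun h => (hK h).union (hJdiff (K h)))).subset ?_
    rintro m ⟨hmJ, hmU⟩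
    by_contra hcon
    simp only [Set.mem_iUnion, not_exists] at hcon
    -- for every coordinate in F, u h meets B m h
    have hw : ∀ h ∈ (F : Set H), (u h ∩ B m h).Nonempty := by
      intro h hhF
      by_cases hhS : h ∈ S
      · have hc := hcon ⟨h, hhF, hhS⟩
        have hc1 : m ∉ {m ∈ (C (K ⟨h, hhF, hhS⟩)).1 | u h ∩ B m h = ∅} :=
          fun hmem => hc (Set.mem_union_left _ hmem)
        have hc2 : m ∉ J \ (C (K ⟨h, hhF, hhS⟩)).1 :=
          fun hmem => hc (Set.mem_union_right _ hmem)
        have hmC : m ∈ (C (K ⟨h, hhF, hhS⟩)).1 := by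
          by_contra hmC
          exact hc2 ⟨hmJ, hmC⟩
        rcases Set.eq_empty_or_nonempty (u h ∩ B m h) with hemp | hne'
        · exact absurd ⟨hmC, hemp⟩ hc1
        · exact hne'
      · rw [hBuniv m h hhS]
        exact ⟨x h, (hu h hhF).2, Set.mem_univ _⟩
    choose w hw1 hw2 using hw
    set z : ∀ h, X h := fun h => if hhF : h ∈ (F : Set H) then w h hhF else (hBne m h).some
      with hzdef
    have hzU : z ∈ U := by
      apply htU
      apply hFsub
      intro h hhF
      rw [hzdef]
      simp only [dif_pos hhF]
      exact hw1 h hhF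
    have hzO : z ∈ O m := by
      apply hBsub m
      intro h _
      rw [hzdef]
      by_cases hhF : h ∈ (F : Set H)
      · simp only [dif_pos hhF]; exact hw2 h hhF
      · simp only [dif_neg hhF]; exact (hBne m h).some_mem
    rw [Set.eq_empty_iff_forall_notMem] at hmU
    exact hmU z ⟨hzU, hzO⟩
  · -- S is empty: every O n is the whole space
    have hOuniv : ∀ m, O m = Set.univ := by
      intro m
      apply Set.eq_univ_of_univ_subset
      refine subset_trans ?_ (hBsub m)
      intro y _ h _
      rw [hBuniv m h (fun hc => hS ⟨h, hc⟩)]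
      exact Set.mem_univ _
    refine ⟨Set.univ, Set.infinite_univ, x0, ?_⟩
    intro U hU
    refine Set.finite_empty.subset ?_
    rintro m ⟨_, hm⟩
    rw [hOuniv m] at hm
    have : x0 ∈ U ∩ Set.univ := ⟨mem_of_mem_nhds hU, Set.mem_univ _⟩
    rw [hm] at this
    exact this
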